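/- Suppose α = α⁻¹ (i.e. α(x,y)² = 1 for all x,y ∈ G), and let 0 ≠ C = Re ≤ R = K[G,Θ,α] with e² = e. Then C is Euclidean self-dual, i.e. C = C^⊥, if and only if e·ê = 0 and 1̄ − ê = (1̄ − ê)·e. -/
import Mathlib


open Finset

variable {K : Type*} {G : Type*}

/-- Multiplication of the twisted skew group ring `K[G,Θ,α]`:
`(Σ_g a_g ḡ)·(Σ_h b_h h̄) = Σ_{g,h} a_g·Θ(g)(b_h)·α(g,h)·(gh)‾`. -/
def tsMul [Field K] [Group G] [Fintype G] [DecidableEq G]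
    (Θ : G →* RingAut K) (α : G → G → Kˣ) (a b : G → K) : G → K :=
  fun x => ∑ p : G × G, if p.1 * p.2 = x then a p.1 * Θ p.1 (b p.2) * (α p.1 p.2 : K) else 0

/-- The identity element `1̄` of the twisted skew group ring. -/
def tsOne [Field K] [Group G] [DecidableEq G] : (G → K) := fun x => if x = 1 then 1 else 0

/-- The adjoint map `a ↦ â = Σ_g Θ(g⁻¹)(a_g)·α(g,g⁻¹)·(g⁻¹)‾`. -/
def tsAdj [Field K] [Group G] (Θ : G →* RingAut K) (α : G → G → Kˣ) (a : G → K) : G → K :=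
  fun x => Θ x (a x⁻¹) * (α x⁻¹ x : K)

set_option linter.unusedSectionVars false
set_option linter.unusedVariables false

section aux
variable [Field K] [Group G] [Fintype G] [DecidableEq G]
variable (Θ : G →* RingAut K) (α : G → G → Kˣ)

lemma thetaComp (g h : G) (z : K) : Θ (g * h) z = Θ g (Θ h z) := by
  rw [map_mul]; rfl

lemma tsMul_apply (a b : G → K) (x : G) :
    tsMul Θ α a b x = ∑ g : G, a g * Θ g (b (g⁻¹ * x)) * (α g (g⁻¹ * x) : K) := by
  unfold tsMul
  rw [Fintype.sum_prod_type]
  refine Finset.sum_congr rfl fun g _ => ?_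
  have h : ∀ h : G, (g * h = x) = (h = g⁻¹ * x) := by
    intro h; simp [eq_inv_mul_iff_mul_eq]
  simp_rw [h]
  simp

lemma tsMul_add_right (a b c : G → K) :
    tsMul Θ α a (b + c) = tsMul Θ α a b + tsMul Θ α a c := by
  funext x
  simp only [tsMul, Pi.add_apply, map_add]
  rw [← Finset.sum_add_distrib]
  refine Finset.sum_congr rfl fun p _ => ?_
  split <;> ring

lemma tsMul_sub_left (a b c : G → K) :
    tsMul Θ α (a - b) c = tsMul Θ α a c - tsMul Θ α b c := by
  funext x
  simp only [tsMul, Pi.sub_apply]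
  rw [← Finset.sum_sub_distrib]
  refine Finset.sum_congr rfl fun p _ => ?_
  split <;> ring

lemma tsMul_zero_right (a : G → K) : tsMul Θ α a (0 : G → K) = 0 := by
  funext x; simp [tsMul]

lemma hαK (hcoc : ∀ g₁ g₂ g₃ : G, α g₁ (g₂ * g₃) * α g₂ g₃ = α (g₁ * g₂) g₃ * α g₁ g₂) (g₁ g₂ g₃ : G) :
    (α g₁ (g₂ * g₃) : K) * (α g₂ g₃ : K) = (α (g₁ * g₂) g₃ : K) * (α g₁ g₂ : K) := by
  exact_mod_cast congrArg Units.val (hcoc g₁ g₂ g₃)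

lemma α_symm (hnorm : ∀ g : G, α g 1 = 1 ∧ α 1 g = 1)
    (hcoc : ∀ g₁ g₂ g₃ : G, α g₁ (g₂ * g₃) * α g₂ g₃ = α (g₁ * g₂) g₃ * α g₁ g₂) (w : G) : (α w w⁻¹ : K) = (α w⁻¹ w : K) := by
  have h := hαK α hcoc w w⁻¹ w
  rw [inv_mul_cancel, mul_inv_cancel] at h
  have h1 : (α w 1 : K) = 1 := by rw [(hnorm w).1, Units.val_one]
  have h2 : (α 1 w : K) = 1 := by rw [(hnorm w).2, Units.val_one]
  rw [h1, h2, one_mul, one_mul] at h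
  exact h.symm

lemma α_sq (hα2 : ∀ x y : G, (α x y : K) ^ 2 = 1) (x y : G) : (α x y : K) * (α x y : K) = 1 := by
  have := hα2 x y; rwa [sq] at this

lemma tsMul_one (hnorm : ∀ g : G, α g 1 = 1 ∧ α 1 g = 1) (a : G → K) : tsMul Θ α a tsOne = a := by
  funext x
  rw [tsMul_apply]
  rw [Finset.sum_eq_single x]
  · have h1 : (α x 1 : K) = 1 := by rw [(hnorm x).1, Units.val_one]
    simp [tsOne, h1]
  · intro g _ hgx
    have : tsOne (g⁻¹ * x) = (0 : K) := by
      simp only [tsOne, ite_eq_right_iff]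
      intro h; exact (hgx (inv_mul_eq_one.mp h)).elim
    rw [this]; simp
  · simp

lemma tsOne_mul (hnorm : ∀ g : G, α g 1 = 1 ∧ α 1 g = 1) (a : G → K) : tsMul Θ α tsOne a = a := by
  funext x
  rw [tsMul_apply]
  rw [Finset.sum_eq_single 1]
  · have h1 : (α 1 x : K) = 1 := by rw [(hnorm x).2, Units.val_one]
    have h2 : (1 : G)⁻¹ * x = x := by group
    rw [h2, h1]
    have h3 : (1 : RingAut K) (a x) = a x := rfl
    simp [tsOne, map_one, h3]
  · intro g _ hg1
    have : tsOne g = (0 : K) := by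
      simp only [tsOne, ite_eq_right_iff]
      intro h; exact (hg1 h).elim
    rw [this]; simp
  · simp


lemma tsMul_assoc
    (hcoc : ∀ g₁ g₂ g₃ : G, α g₁ (g₂ * g₃) * α g₂ g₃ = α (g₁ * g₂) g₃ * α g₁ g₂)
    (hstab : ∀ g x y : G, Θ g ((α x y : K)) = (α x y : K))
    (a b c : G → K) :
    tsMul Θ α (tsMul Θ α a b) c = tsMul Θ α a (tsMul Θ α b c) := by
  funext x
  simp_rw [tsMul_apply, Finset.sum_mul, map_sum, Finset.mul_sum, Finset.sum_mul]
  rw [Finset.sum_comm]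
  refine Finset.sum_congr rfl fun g _ => ?_
  rw [← Equiv.sum_comp (Equiv.mulLeft g)]
  refine Finset.sum_congr rfl fun h _ => ?_
  simp only [Equiv.coe_mulLeft]
  have e1 : (g * h)⁻¹ * x = h⁻¹ * (g⁻¹ * x) := by group
  have e2 : g⁻¹ * (g * h) = h := by group
  have e3 : h * (h⁻¹ * (g⁻¹ * x)) = g⁻¹ * x := by group
  rw [e1, e2, thetaComp Θ g h (c (h⁻¹ * (g⁻¹ * x))), map_mul (Θ g), map_mul (Θ g), hstab]
  have key := hαK α hcoc g h (h⁻¹ * (g⁻¹ * x))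
  rw [e3] at key
  linear_combination (-(a g * Θ g (b h) * Θ g (Θ h (c (h⁻¹ * (g⁻¹ * x)))))) * key


lemma tsInner_move
    (hnorm : ∀ g : G, α g 1 = 1 ∧ α 1 g = 1)
    (hcoc : ∀ g₁ g₂ g₃ : G, α g₁ (g₂ * g₃) * α g₂ g₃ = α (g₁ * g₂) g₃ * α g₁ g₂)
    (hstab : ∀ g x y : G, Θ g ((α x y : K)) = (α x y : K))
    (hα2 : ∀ x y : G, (α x y : K) ^ 2 = 1)
    (a b c : G → K) :
    ∑ x : G, tsMul Θ α a b x * c x = ∑ x : G, a x * tsMul Θ α c (tsAdj Θ α b) x := by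
  simp_rw [tsMul_apply, Finset.sum_mul, Finset.mul_sum]
  rw [Finset.sum_comm]
  refine Finset.sum_congr rfl fun g _ => ?_
  refine Finset.sum_congr rfl fun u _ => ?_
  have e0 : (u⁻¹ * g)⁻¹ = g⁻¹ * u := by group
  have e1 : u * (u⁻¹ * g) = g := by group
  simp only [tsAdj, e0]
  rw [map_mul (Θ u), hstab, ← thetaComp, e1]
  -- key cocycle computation
  have k1 := hαK α hcoc u (u⁻¹ * g) (g⁻¹ * u)
  have e2 : (u⁻¹ * g) * (g⁻¹ * u) = 1 := by group
  rw [e2, e1] at k1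
  have e3 : (α u 1 : K) = 1 := by rw [(hnorm u).1, Units.val_one]
  rw [e3, one_mul] at k1
  -- k1 : αK(u⁻¹g, g⁻¹u) = αK(g, g⁻¹u) * αK(u, u⁻¹g)
  have k2 : (α (g⁻¹ * u) (u⁻¹ * g) : K) = (α (u⁻¹ * g) (g⁻¹ * u) : K) := by
    have := α_symm α hnorm hcoc (g⁻¹ * u)
    rwa [show (g⁻¹ * u)⁻¹ = u⁻¹ * g by group] at this
  have k3 : (α (g⁻¹ * u) (u⁻¹ * g) : K) * (α u (u⁻¹ * g) : K) = (α g (g⁻¹ * u) : K) := by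
    rw [k2, k1, mul_assoc, α_sq α hα2, mul_one]
  linear_combination (-(a g * Θ g (b (g⁻¹ * u)) * c u)) * k3

lemma tsAdj_adj
    (hnorm : ∀ g : G, α g 1 = 1 ∧ α 1 g = 1)
    (hcoc : ∀ g₁ g₂ g₃ : G, α g₁ (g₂ * g₃) * α g₂ g₃ = α (g₁ * g₂) g₃ * α g₁ g₂)
    (hstab : ∀ g x y : G, Θ g ((α x y : K)) = (α x y : K))
    (hα2 : ∀ x y : G, (α x y : K) ^ 2 = 1)
    (a : G → K) : tsAdj Θ α (tsAdj Θ α a) = a := by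
  funext x
  simp only [tsAdj, inv_inv]
  rw [map_mul (Θ x), hstab, ← thetaComp, mul_inv_cancel]
  have h1 : Θ 1 (a x) = a x := by rw [map_one]; rfl
  rw [h1, α_symm α hnorm hcoc x, mul_assoc, α_sq α hα2, mul_one]


lemma tsInner_nondeg (b : G → K) (h : ∀ a : G → K, ∑ g : G, a g * b g = 0) : b = 0 := by
  funext x
  have h2 : ∑ g : G, (if g = x then (1:K) else 0) * b g = b x := by
    simp [ite_mul]
  have := h (fun g => if g = x then 1 else 0)
  rw [h2] at this
  simpa using this

lemma tsAdj_mul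
    (hnorm : ∀ g : G, α g 1 = 1 ∧ α 1 g = 1)
    (hcoc : ∀ g₁ g₂ g₃ : G, α g₁ (g₂ * g₃) * α g₂ g₃ = α (g₁ * g₂) g₃ * α g₁ g₂)
    (hstab : ∀ g x y : G, Θ g ((α x y : K)) = (α x y : K))
    (hα2 : ∀ x y : G, (α x y : K) ^ 2 = 1)
    (a b : G → K) :
    tsAdj Θ α (tsMul Θ α a b) = tsMul Θ α (tsAdj Θ α b) (tsAdj Θ α a) := by
  have key : ∀ c : G → K, ∑ x : G, c x * tsAdj Θ α (tsMul Θ α a b) x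
      = ∑ x : G, c x * tsMul Θ α (tsAdj Θ α b) (tsAdj Θ α a) x := by
    intro c
    have s1 : ∑ x : G, c x * tsAdj Θ α (tsMul Θ α a b) x
        = ∑ x : G, c x * tsMul Θ α tsOne (tsAdj Θ α (tsMul Θ α a b)) x := by
      rw [tsOne_mul Θ α hnorm]
    have s2 : ∑ x : G, tsMul Θ α c (tsMul Θ α a b) x * tsOne x
        = ∑ x : G, c x * tsMul Θ α tsOne (tsAdj Θ α (tsMul Θ α a b)) x :=
      tsInner_move Θ α hnorm hcoc hstab hα2 c (tsMul Θ α a b) tsOne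
    have s3 : ∑ x : G, tsMul Θ α (tsMul Θ α c a) b x * tsOne x
        = ∑ x : G, tsMul Θ α c a x * tsMul Θ α tsOne (tsAdj Θ α b) x :=
      tsInner_move Θ α hnorm hcoc hstab hα2 (tsMul Θ α c a) b tsOne
    have s4 : ∑ x : G, tsMul Θ α c a x * tsAdj Θ α b x
        = ∑ x : G, c x * tsMul Θ α (tsAdj Θ α b) (tsAdj Θ α a) x :=
      tsInner_move Θ α hnorm hcoc hstab hα2 c a (tsAdj Θ α b)
    rw [tsOne_mul Θ α hnorm] at s3
    rw [← tsMul_assoc Θ α hcoc hstab] at s2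
    rw [s1, ← s2, s3, s4]
  have hdiff : tsAdj Θ α (tsMul Θ α a b) - tsMul Θ α (tsAdj Θ α b) (tsAdj Θ α a) = 0 := by
    apply tsInner_nondeg
    intro r
    have := key r
    simp only [Pi.sub_apply, mul_sub]
    rw [Finset.sum_sub_distrib, this, sub_self]
  have := sub_eq_zero.mp hdiff
  exact this

end aux

/-- Suppose `α = α⁻¹` and let `0 ≠ C = Re ≤ R = K[G,Θ,α]` with
`e² = e`.  Then `C` is Euclidean self-dual (`C = C^⊥`) iff `e·ê = 0` and
`1̄ − ê = (1̄ − ê)·e`. -/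
theorem stmt16 [Field K] [Fintype K] [Group G] [Fintype G] [DecidableEq G]
    (Θ : G →* RingAut K) (α : G → G → Kˣ)
    (hnorm : ∀ g : G, α g 1 = 1 ∧ α 1 g = 1)
    (hcoc : ∀ g₁ g₂ g₃ : G, α g₁ (g₂ * g₃) * α g₂ g₃ = α (g₁ * g₂) g₃ * α g₁ g₂)
    (hstab : ∀ g x y : G, Θ g ((α x y : K)) = (α x y : K))
    (hα2 : ∀ x y : G, (α x y : K) ^ 2 = 1)
    (e : G → K) (he : tsMul Θ α e e = e) (he0 : e ≠ 0) :
    ({x : G → K | ∃ r : G → K, x = tsMul Θ α r e} =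
        {b : G → K | ∀ c : G → K, (∃ r : G → K, c = tsMul Θ α r e) →
          ∑ g : G, c g * b g = 0}) ↔
      (tsMul Θ α e (tsAdj Θ α e) = 0 ∧
       tsOne - tsAdj Θ α e = tsMul Θ α (tsOne - tsAdj Θ α e) e) := by
  set E := tsAdj Θ α e with hE
  have move := tsInner_move Θ α hnorm hcoc hstab hα2
  have assoc := tsMul_assoc Θ α hcoc hstab
  have hEidem : tsMul Θ α E E = E := by
    rw [hE, ← tsAdj_mul Θ α hnorm hcoc hstab hα2 e e, he]
  constructor
  · intro hC
    have heS : e ∈ {x : G → K | ∃ r : G → K, x = tsMul Θ α r e} := ⟨e, he.symm⟩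
    have heT := hC ▸ heS
    have h1 : tsMul Θ α e E = 0 := by
      apply tsInner_nondeg
      intro r
      have := heT (tsMul Θ α r e) ⟨r, rfl⟩
      rwa [move r e e] at this
    refine ⟨h1, ?_⟩
    have hmemT : (tsOne - E) ∈ {b : G → K | ∀ c : G → K,
        (∃ r : G → K, c = tsMul Θ α r e) → ∑ g : G, c g * b g = 0} := by
      intro c hc
      obtain ⟨r, rfl⟩ := hc
      rw [move r e (tsOne - E)]
      have hz : tsMul Θ α (tsOne - E) E = 0 := by
        rw [tsMul_sub_left, tsOne_mul Θ α hnorm, hEidem, sub_self]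
      rw [hz]
      simp
    have hmemS := hC ▸ hmemT
    obtain ⟨r, hr⟩ := hmemS
    rw [hr, assoc, he]
  · rintro ⟨h1, h2⟩
    ext b
    constructor
    · rintro ⟨rb, rfl⟩ c ⟨rc, rfl⟩
      rw [move rc e (tsMul Θ α rb e), assoc, h1, tsMul_zero_right]
      simp
    · intro hb
      have hbE : tsMul Θ α b E = 0 := by
        apply tsInner_nondeg
        intro r
        have := hb (tsMul Θ α r e) ⟨r, rfl⟩
        rwa [move r e b] at this
      refine ⟨tsMul Θ α b (tsOne - E), ?_⟩
      calc b = tsMul Θ α b tsOne := (tsMul_one Θ α hnorm b).symm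
        _ = tsMul Θ α b (E + (tsOne - E)) := by rw [add_sub_cancel]
        _ = tsMul Θ α b E + tsMul Θ α b (tsOne - E) := tsMul_add_right Θ α b E (tsOne - E)
        _ = tsMul Θ α b (tsOne - E) := by rw [hbE, zero_add]
        _ = tsMul Θ α b (tsMul Θ α (tsOne - E) e) := by rw [← h2]
        _ = tsMul Θ α (tsMul Θ α b (tsOne - E)) e := (assoc b (tsOne - E) e).symm
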